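/- arXiv:2210.04874 — 6 statements merged into one kernel-verified Lean document; each statement's English description precedes it below -/
import Mathlib

section
/- For probability distributions p, q on a finite alphabet X, equality 1 - F_c(p,q) = T_c(p,q) holds if and only if for every x in X, p(x) = q(x) or p(x) = 0 or q(x) = 0. -/
lemma min_le_sqrt_mul' {a b : ℝ} (ha : 0 ≤ a) (hb : 0 ≤ b) :
    min a b ≤ Real.sqrt (a * b) := by
  rcases le_total a b with h | h
  · rw [min_eq_left h]
    calc a = Real.sqrt (a * a) := (Real.sqrt_mul_self ha).symm
    _ ≤ Real.sqrt (a * b) := Real.sqrt_le_sqrt (by nlinarith)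
  · rw [min_eq_right h]
    calc b = Real.sqrt (b * b) := (Real.sqrt_mul_self hb).symm
    _ ≤ Real.sqrt (a * b) := Real.sqrt_le_sqrt (by nlinarith)

lemma min_eq_sqrt_mul_iff' {a b : ℝ} (ha : 0 ≤ a) (hb : 0 ≤ b) :
    min a b = Real.sqrt (a * b) ↔ a = b ∨ a = 0 ∨ b = 0 := by
  constructor
  · intro h
    have h2 : (min a b) ^ 2 = a * b := by
      rw [h, Real.sq_sqrt (mul_nonneg ha hb)]
    rcases le_total a b with hab | hab
    · rw [min_eq_left hab] at h2
      have h3 : a * (b - a) = 0 := by nlinarith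
      rcases mul_eq_zero.1 h3 with h4 | h4
      · exact Or.inr (Or.inl h4)
      · exact Or.inl (by linarith)
    · rw [min_eq_right hab] at h2
      have h3 : b * (a - b) = 0 := by nlinarith
      rcases mul_eq_zero.1 h3 with h4 | h4
      · exact Or.inr (Or.inr h4)
      · exact Or.inl (by linarith)
  · rintro (h | h | h)
    · subst h; rw [min_self, Real.sqrt_mul_self ha]
    · subst h; simp [min_eq_left hb]
    · subst h; simp [min_eq_right ha]

open Finset in
theorem classical_fvdg_lower_eq_iff {X : Type*} [Fintype X] (p q : X → ℝ)
    (hp : ∀ x, 0 ≤ p x) (hq : ∀ x, 0 ≤ q x)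
    (hp1 : ∑ x, p x = 1) (hq1 : ∑ x, q x = 1) :
    1 - ∑ x, Real.sqrt (p x * q x) = (1 / 2) * ∑ x, |p x - q x| ↔
      ∀ x, p x = q x ∨ p x = 0 ∨ q x = 0 := by
  have habs : ∀ x, |p x - q x| = p x + q x - 2 * min (p x) (q x) := by
    intro x
    rcases le_total (p x) (q x) with h | h
    · rw [abs_of_nonpos (by linarith), min_eq_left h]; ring
    · rw [abs_of_nonneg (by linarith), min_eq_right h]; ring
  have key : (1 / 2 : ℝ) * ∑ x, |p x - q x| = 1 - ∑ x, min (p x) (q x) := by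
    calc (1 / 2 : ℝ) * ∑ x, |p x - q x|
        = (1 / 2) * ∑ x, (p x + q x - 2 * min (p x) (q x)) := by
          rw [Finset.sum_congr rfl (fun x _ => habs x)]
      _ = (1 / 2) * (∑ x, p x + ∑ x, q x - 2 * ∑ x, min (p x) (q x)) := by
          rw [Finset.sum_sub_distrib, Finset.sum_add_distrib, Finset.mul_sum]
      _ = 1 - ∑ x, min (p x) (q x) := by rw [hp1, hq1]; ring
  have hiff : ∑ x, min (p x) (q x) = ∑ x, Real.sqrt (p x * q x) ↔
      ∀ x ∈ Finset.univ, min (p x) (q x) = Real.sqrt (p x * q x) :=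
    Finset.sum_eq_sum_iff_of_le (fun x _ => min_le_sqrt_mul' (hp x) (hq x))
  rw [key]
  constructor
  · intro h x
    have hs : ∑ x, min (p x) (q x) = ∑ x, Real.sqrt (p x * q x) := by linarith
    exact (min_eq_sqrt_mul_iff' (hp x) (hq x)).1 (hiff.1 hs x (Finset.mem_univ x))
  · intro h
    have hs : ∑ x, min (p x) (q x) = ∑ x, Real.sqrt (p x * q x) :=
      hiff.2 fun x _ => (min_eq_sqrt_mul_iff' (hp x) (hq x)).2 (h x)
    linarith
end

section
/- For probability distributions p, q on a finite alphabet X, equality T_c(p,q) = √(1 - F_c(p,q)²) holds if and only if p = q, or p(x)·q(x) = 0 for all x, or there exists b ∈ (0,1) such that for every x, q(x) = b·p(x) or q(x) = (1/b)·p(x). -/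
open Finset

private lemma cs_eq_iff' {X : Type*} [Fintype X] (u v : X → ℝ)
    (hv : 0 < ∑ x, v x ^ 2) :
    (∑ x, u x * v x) ^ 2 = (∑ x, u x ^ 2) * (∑ x, v x ^ 2) ↔
      ∀ x, (∑ y, v y ^ 2) * u x = (∑ y, u y * v y) * v x := by
  set T2 := ∑ x, v x ^ 2 with hT2
  set S := ∑ x, u x * v x with hS
  have key : ∑ x, (T2 * u x - S * v x) ^ 2
      = T2 * ((∑ x, u x ^ 2) * T2 - S ^ 2) := by
    have h1 : ∀ x ∈ Finset.univ, (T2 * u x - S * v x) ^ 2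
        = T2 ^ 2 * u x ^ 2 - 2 * T2 * S * (u x * v x) + S ^ 2 * v x ^ 2 := by
      intro x _; ring
    rw [Finset.sum_congr rfl h1, Finset.sum_add_distrib, Finset.sum_sub_distrib,
      ← Finset.mul_sum, ← Finset.mul_sum, ← Finset.mul_sum, ← hS, ← hT2]
    ring
  constructor
  · intro h
    have hz : ∑ x, (T2 * u x - S * v x) ^ 2 = 0 := by rw [key, ← h]; ring
    intro x
    have h2 := (Finset.sum_eq_zero_iff_of_nonneg (fun x _ => sq_nonneg _)).mp hz x (Finset.mem_univ x)
    have h3 := pow_eq_zero_iff (n := 2) (by norm_num) |>.mp h2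
    linarith
  · intro h
    have hz : ∑ x, (T2 * u x - S * v x) ^ 2 = 0 := by
      apply Finset.sum_eq_zero; intro x _; rw [h x]; ring
    rw [key] at hz
    rcases mul_eq_zero.mp hz with h1 | h1
    · linarith
    · nlinarith

open Finset in
theorem classical_fvdg_upper_eq_iff {X : Type*} [Fintype X] (p q : X → ℝ)
    (hp : ∀ x, 0 ≤ p x) (hq : ∀ x, 0 ≤ q x)
    (hp1 : ∑ x, p x = 1) (hq1 : ∑ x, q x = 1) :
    (1 / 2) * ∑ x, |p x - q x| =
      Real.sqrt (1 - (∑ x, Real.sqrt (p x * q x)) ^ 2) ↔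
      p = q ∨ (∀ x, p x * q x = 0) ∨
        ∃ b ∈ Set.Ioo (0 : ℝ) 1, ∀ x, q x = b * p x ∨ q x = (1 / b) * p x := by
  set a : X → ℝ := fun x => Real.sqrt (p x) with ha
  set c : X → ℝ := fun x => Real.sqrt (q x) with hc
  have ha0 : ∀ x, 0 ≤ a x := fun x => Real.sqrt_nonneg _
  have hc0 : ∀ x, 0 ≤ c x := fun x => Real.sqrt_nonneg _
  have ha2 : ∀ x, a x ^ 2 = p x := fun x => Real.sq_sqrt (hp x)
  have hc2 : ∀ x, c x ^ 2 = q x := fun x => Real.sq_sqrt (hq x)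
  have hFeq : ∑ x, Real.sqrt (p x * q x) = ∑ x, a x * c x :=
    Finset.sum_congr rfl fun x _ => Real.sqrt_mul (hp x) _
  set F := ∑ x, a x * c x with hFdef
  have hF0 : 0 ≤ F := Finset.sum_nonneg fun x _ => mul_nonneg (ha0 x) (hc0 x)
  have hsa : ∑ x, a x ^ 2 = 1 := by simp only [ha2]; exact hp1
  have hsc : ∑ x, c x ^ 2 = 1 := by simp only [hc2]; exact hq1
  have hF1 : F ^ 2 ≤ 1 := by
    have h := Finset.sum_mul_sq_le_sq_mul_sq Finset.univ a c
    rw [hsa, hsc] at h; simpa [hFdef] using h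
  have habs : ∀ x, |p x - q x| = |a x - c x| * (a x + c x) := by
    intro x
    rw [← ha2 x, ← hc2 x]
    have h1 : a x ^ 2 - c x ^ 2 = (a x - c x) * (a x + c x) := by ring
    rw [h1, abs_mul, abs_of_nonneg (by positivity : (0:ℝ) ≤ a x + c x)]
  set S := ∑ x, |p x - q x| with hSdef
  have hS0 : 0 ≤ S := Finset.sum_nonneg fun x _ => abs_nonneg _
  have hSuv : S = ∑ x, |a x - c x| * (a x + c x) :=
    Finset.sum_congr rfl fun x _ => habs x
  have hsum_u2 : ∑ x, |a x - c x| ^ 2 = 2 - 2 * F := by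
    have h1 : ∀ x ∈ Finset.univ, |a x - c x| ^ 2 = a x ^ 2 + c x ^ 2 - 2 * (a x * c x) := by
      intro x _; rw [sq_abs]; ring
    rw [Finset.sum_congr rfl h1, Finset.sum_sub_distrib, Finset.sum_add_distrib,
      ← Finset.mul_sum, hsa, hsc, ← hFdef]
    ring
  have hsum_v2 : ∑ x, (a x + c x) ^ 2 = 2 + 2 * F := by
    have h1 : ∀ x ∈ Finset.univ, (a x + c x) ^ 2 = a x ^ 2 + c x ^ 2 + 2 * (a x * c x) := by
      intro x _; ring
    rw [Finset.sum_congr rfl h1, Finset.sum_add_distrib, Finset.sum_add_distrib,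
      ← Finset.mul_sum, hsa, hsc, ← hFdef]
    ring
  have hv_pos : 0 < ∑ x, (a x + c x) ^ 2 := by rw [hsum_v2]; linarith
  rw [hFeq]
  clear_value a c F S
  constructor
  · intro h
    have hFle : 0 ≤ 1 - F ^ 2 := by linarith
    have hsq : (1 / 2 * S) ^ 2 = 1 - F ^ 2 := by
      rw [h]; exact Real.sq_sqrt hFle
    have hS2 : S ^ 2 = (2 - 2 * F) * (2 + 2 * F) := by nlinarith
    have hcs : (∑ x, |a x - c x| * (a x + c x)) ^ 2
        = (∑ x, |a x - c x| ^ 2) * (∑ x, (a x + c x) ^ 2) := by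
      rw [← hSuv, hsum_u2, hsum_v2, hS2]
    have key := (cs_eq_iff' (fun x => |a x - c x|) (fun x => a x + c x) hv_pos).mp hcs
    simp only [hsum_v2, ← hSuv] at key
    by_cases hSz : S = 0
    · left
      funext x
      have hz : ∑ x, |p x - q x| = 0 := by rw [← hSdef, hSz]
      have h2 := (Finset.sum_eq_zero_iff_of_nonneg (fun x _ => abs_nonneg _)).mp hz x (Finset.mem_univ x)
      have h3 := abs_eq_zero.mp h2
      linarith
    · have hSpos : 0 < S := lt_of_le_of_ne hS0 (Ne.symm hSz)
      by_cases hSF : S = 2 + 2 * F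
      · right; left
        intro x
        have hk := key x
        rw [hSF] at hk
        have hpos : (0:ℝ) < 2 + 2 * F := by linarith
        have huv : |a x - c x| = a x + c x := mul_left_cancel₀ (ne_of_gt hpos) hk
        rcases le_total (c x) (a x) with hle | hle
        · have habs' : |a x - c x| = a x - c x := abs_of_nonneg (by linarith)
          have hcx : c x = 0 := by
            rw [habs'] at huv
            have := hc0 x; linarith
          have hqx : q x = 0 := by rw [← hc2 x, hcx]; ring
          rw [hqx]; ring
        · have habs' : |a x - c x| = c x - a x := by
            rw [abs_sub_comm]; exact abs_of_nonneg (by linarith)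
          have hax : a x = 0 := by
            rw [habs'] at huv
            have := ha0 x; linarith
          have hpx : p x = 0 := by rw [← ha2 x, hax]; ring
          rw [hpx]; ring
      · right; right
        have hSle : S < 2 + 2 * F := by
          have hle : S ≤ 2 + 2 * F := by nlinarith [sq_nonneg (S - (2 + 2 * F))]
          exact lt_of_le_of_ne hle hSF
        have hden : (0:ℝ) < 2 + 2 * F + S := by linarith
        set r : ℝ := (2 + 2 * F - S) / (2 + 2 * F + S) with hr
        have hr0 : 0 < r := div_pos (by linarith) hden
        have hr1 : r < 1 := by rw [hr, div_lt_one hden]; linarith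
        clear_value r
        refine ⟨r ^ 2, ⟨pow_pos hr0 2, by nlinarith⟩, ?_⟩
        intro x
        have hk := key x
        rcases le_total (c x) (a x) with hle | hle
        · left
          have habs' : |a x - c x| = a x - c x := abs_of_nonneg (by linarith)
          rw [habs'] at hk
          have hcx : c x = r * a x := by
            rw [hr]; field_simp
            linear_combination -hk
          rw [← hc2 x, ← ha2 x, hcx]; ring
        · right
          have habs' : |a x - c x| = c x - a x := by
            rw [abs_sub_comm]; exact abs_of_nonneg (by linarith)
          rw [habs'] at hk
          have hax : a x = r * c x := by
            rw [hr]; field_simp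
            linear_combination -hk
          have hq' : p x = r ^ 2 * q x := by
            rw [← hc2 x, ← ha2 x, hax]; ring
          rw [hq']
          field_simp
  · rintro (rfl | hpq | ⟨b, ⟨hb0, hb1⟩, hbq⟩)
    · have hac : a = c := by rw [ha, hc]
      have hS0' : S = 0 := by
        rw [hSdef]; apply Finset.sum_eq_zero; intro x _; simp
      have hF1' : F = 1 := by
        rw [hFdef, ← hac]
        simpa [pow_two] using hsa
      rw [hS0', hF1']
      norm_num
    · have hF0' : F = 0 := by
        rw [hFdef]
        apply Finset.sum_eq_zero
        intro x _
        rcases mul_eq_zero.mp (hpq x) with h | h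
        · have : a x = 0 := by rw [ha]; simp [h]
          rw [this]; ring
        · have : c x = 0 := by rw [hc]; simp [h]
          rw [this]; ring
      have hS2' : S = 2 := by
        rw [hSdef]
        have h1 : ∀ x ∈ Finset.univ, |p x - q x| = p x + q x := by
          intro x _
          rcases mul_eq_zero.mp (hpq x) with h | h
          · rw [h, abs_of_nonpos (by linarith [hq x])]; ring
          · rw [h, abs_of_nonneg (by linarith [hp x])]; ring
        rw [Finset.sum_congr rfl h1, Finset.sum_add_distrib, hp1, hq1]; norm_num
      rw [hS2', hF0']
      norm_num
    · set s : ℝ := Real.sqrt b with hs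
      have hs0 : 0 < s := Real.sqrt_pos.mpr hb0
      have hs1 : s < 1 := by
        rw [hs, show (1:ℝ) = Real.sqrt 1 by simp]
        exact Real.sqrt_lt_sqrt (le_of_lt hb0) hb1
      have hs2 : s ^ 2 = b := Real.sq_sqrt (le_of_lt hb0)
      set μ : ℝ := (1 - s) / (1 + s) with hμ
      have hden : (0:ℝ) < 1 + s := by linarith
      clear_value s μ
      have hprop : ∀ x, |a x - c x| = μ * (a x + c x) := by
        intro x
        rcases hbq x with h | h
        · have hcx : c x = s * a x := by
            simp only [hc, ha, h]
            rw [Real.sqrt_mul (le_of_lt hb0), ← hs]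
          rw [hcx, show a x - s * a x = (1 - s) * a x by ring, abs_mul,
            abs_of_nonneg (by linarith : (0:ℝ) ≤ 1 - s), abs_of_nonneg (ha0 x), hμ]
          field_simp
        · have hcx : c x = s⁻¹ * a x := by
            simp only [hc, ha, h, one_div]
            rw [Real.sqrt_mul (by positivity), Real.sqrt_inv, ← hs]
          have hsinv : 1 ≤ s⁻¹ := one_le_inv_iff₀.mpr ⟨hs0, le_of_lt hs1⟩
          rw [hcx, abs_sub_comm, show s⁻¹ * a x - a x = (s⁻¹ - 1) * a x by ring, abs_mul,
            abs_of_nonneg (by linarith : (0:ℝ) ≤ s⁻¹ - 1), abs_of_nonneg (ha0 x), hμ]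
          field_simp
          ring
      have hSμ : S = μ * (2 + 2 * F) := by
        rw [hSuv, ← hsum_v2, Finset.mul_sum]
        exact Finset.sum_congr rfl fun x _ => by rw [hprop x]; ring
      have hu2μ : 2 - 2 * F = μ ^ 2 * (2 + 2 * F) := by
        rw [← hsum_u2, ← hsum_v2, Finset.mul_sum]
        exact Finset.sum_congr rfl fun x _ => by rw [hprop x]; ring
      have hS2 : S ^ 2 = (2 - 2 * F) * (2 + 2 * F) := by
        rw [hSμ, hu2μ]; ring
      have hkey : 1 - F ^ 2 = (1 / 2 * S) ^ 2 := by linear_combination (-1/4 : ℝ) * hS2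
      rw [hkey, Real.sqrt_sq (by linarith : (0:ℝ) ≤ 1 / 2 * S)]
end

section
/- The equation (ln x)² = 2(ln x/x)(x − 1) for x ≥ 1 has exactly two solutions: x = 1 and x = exp(W₀(−2/e) + 2), where W₀ is the principal branch of the Lambert W function. -/
/-- The equation `(ln x)² = 2 (ln x / x)(x - 1)` on `[1, ∞)` has exactly the two
solutions `x = 1` and `x = x₀`, where `x₀` is the unique solution greater than `e`
(equal to `exp(W₀(-2/e) + 2)`), characterized by `ln x₀ · x₀ = 2 (x₀ - 1)`. -/
theorem log_sq_eq_tangent_iff (x₀ : ℝ) (hx₀ : Real.exp 1 < x₀)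
    (hx₀eq : Real.log x₀ * x₀ = 2 * (x₀ - 1)) :
    ∀ x : ℝ, 1 ≤ x →
      ((Real.log x) ^ 2 = 2 * (Real.log x / x) * (x - 1) ↔ x = 1 ∨ x = x₀) := by
  have he : (1:ℝ) < Real.exp 1 := by
    have := Real.exp_one_gt_d9; linarith
  have hx₀1 : (1:ℝ) < x₀ := he.trans hx₀
  set f : ℝ → ℝ := fun x => x * Real.log x - 2 * (x - 1) with hfdef
  have hconv : StrictConvexOn ℝ (Set.Ici (1:ℝ)) f := by
    have h1 : StrictConvexOn ℝ (Set.Ici (1:ℝ)) (fun x : ℝ => x * Real.log x) :=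
      Real.strictConvexOn_mul_log.subset (Set.Ici_subset_Ici.2 zero_le_one) (convex_Ici 1)
    have h2 : ConcaveOn ℝ (Set.Ici (1:ℝ)) (fun x : ℝ => 2 * (x - 1)) :=
      ⟨convex_Ici 1, fun x _ y _ a b ha hb hab => by
        simp only [smul_eq_mul]; nlinarith⟩
    exact h1.sub_concaveOn h2
  have hf1 : f 1 = 0 := by simp [hfdef]
  have hfx₀ : f x₀ = 0 := by simp only [hfdef]; nlinarith [hx₀eq]
  have key : ∀ a b c : ℝ, 1 ≤ a → a < b → b < c → f a = 0 → f c = 0 → f b < 0 := by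
    intro a b c ha hab hbc hfa hfc
    have hb : b ∈ openSegment ℝ a c := by
      rw [openSegment_eq_Ioo (hab.trans hbc)]; exact ⟨hab, hbc⟩
    obtain ⟨u, v, hu, hv, huv, rfl⟩ := hb
    have := hconv.2 (Set.mem_Ici.2 ha) (Set.mem_Ici.2 (ha.trans (hab.trans hbc).le))
      (hab.trans hbc).ne hu hv huv
    simpa [hfa, hfc] using this
  intro x hx
  rcases eq_or_lt_of_le hx with h1 | h1
  · simp [← h1]
  · have hxpos : (0:ℝ) < x := lt_trans one_pos h1
    have hlog : 0 < Real.log x := Real.log_pos h1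
    constructor
    · intro heq
      have heq' : Real.log x * (x * Real.log x - 2 * (x - 1)) = 0 := by
        field_simp at heq
        nlinarith [heq]
      have hfx : f x = 0 := by
        rcases mul_eq_zero.1 heq' with h | h
        · exact absurd h hlog.ne'
        · simpa [hfdef] using h
      right
      by_contra hne
      rcases lt_or_gt_of_ne hne with hlt | hgt
      · have := key 1 x x₀ le_rfl h1 hlt hf1 hfx₀
        linarith [this, hfx]
      · have := key 1 x₀ x le_rfl hx₀1 hgt hf1 hfx
        linarith [this, hfx₀]
    · rintro (rfl | h)
      · exact absurd h1 (lt_irrefl 1)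
      · subst h
        field_simp
        nlinarith [hx₀eq, hlog]
end

section
/- Let v ∈ ℝ^d be a unit vector indexed by pairs (j,k) with j ∈ {1,...,d_A}, k ∈ {1,...,d_B}, with all components nonzero aggregates in the sense that for each term v_{jk}² > 0 one has ∑_l v_{lk}² > 0. Then 2·√(∑_{k,j} v_{jk}² · (ln((∑_l v_{lk}²)/v_{jk}²))²) ≤ 2·√(f(d_A)), where f is the increasing concave upper bound of (ln x)² on [1,∞) given by f(x) = 2(ln x₀/x₀)(x−1) for x ∈ [1,x₀] and f(x) = (ln x)² for x ≥ x₀, with x₀ > e satisfying (ln x₀)x₀ = 2(x₀−1). -/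
open Real Set

/-- `log x / x` is antitone on `[e, ∞)`. -/
lemma logdiv_anti : AntitoneOn (fun x : ℝ => Real.log x / x) (Set.Ici (Real.exp 1)) := by
  have he : (0:ℝ) < Real.exp 1 := Real.exp_pos 1
  apply antitoneOn_of_hasDerivWithinAt_nonpos (convex_Ici _)
    (f' := fun x => (1 - Real.log x) / x ^ 2)
  · apply ContinuousOn.div (Real.continuousOn_log.mono ?_) continuousOn_id ?_
    · intro x hx; simp only [mem_Ici] at hx; intro h; simp at h; linarith
    · intro x hx; simp only [mem_Ici] at hx; intro h; dsimp at h; linarith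
  · intro x hx
    rw [interior_Ici] at hx
    have hx0 : x ≠ 0 := by have := hx.out; intro h; rw [h] at this; linarith
    have := ((Real.hasDerivAt_log hx0).div (hasDerivAt_id x) hx0)
    refine (HasDerivAt.hasDerivWithinAt ?_)
    exact this.congr_deriv (by show (x⁻¹ * x - Real.log x * 1) / x ^ 2 = _; rw [inv_mul_cancel₀ hx0, mul_one])
  · intro x hx
    rw [interior_Ici] at hx
    have hx1 : Real.exp 1 < x := hx
    have hlog : 1 ≤ Real.log x := by
      rw [← Real.log_exp 1]
      exact Real.log_le_log (Real.exp_pos 1) hx1.le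
    have hx0 : 0 < x := lt_trans he hx1
    apply div_nonpos_of_nonpos_of_nonneg <;> nlinarith

/-- `2(x-1) - x log x` is antitone on `[e, ∞)`. -/
lemma psi_anti : AntitoneOn (fun x : ℝ => 2 * (x - 1) - x * Real.log x) (Set.Ici (Real.exp 1)) := by
  have he : (0:ℝ) < Real.exp 1 := Real.exp_pos 1
  apply antitoneOn_of_hasDerivWithinAt_nonpos (convex_Ici _)
    (f' := fun x => 1 - Real.log x)
  · apply ContinuousOn.sub (by fun_prop)
    apply ContinuousOn.mul continuousOn_id (Real.continuousOn_log.mono ?_)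
    intro x hx; simp only [mem_Ici] at hx; intro h; simp at h; linarith
  · intro x hx
    rw [interior_Ici] at hx
    have hx0 : x ≠ 0 := by have := hx.out; intro h; rw [h] at this; linarith
    have h1 : HasDerivAt (fun x : ℝ => 2 * (x - 1)) 2 x := by
      simpa using ((hasDerivAt_id x).sub_const 1).const_mul 2
    have h2 : HasDerivAt (fun x : ℝ => x * Real.log x) (Real.log x + 1) x := by
      have := (hasDerivAt_id x).mul (Real.hasDerivAt_log hx0)
      exact this.congr_deriv (by show 1 * Real.log x + x * x⁻¹ = _; rw [mul_inv_cancel₀ hx0]; ring)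
    refine (h1.sub h2).hasDerivWithinAt.congr_deriv (by ring)
  · intro x hx
    rw [interior_Ici] at hx
    have hlog : 1 ≤ Real.log x := by
      rw [← Real.log_exp 1]
      exact Real.log_le_log (Real.exp_pos 1) hx.out.le
    linarith

lemma key_ineq (x₀ : ℝ) (hx₀ : Real.exp 1 < x₀) (hx₀eq : Real.log x₀ * x₀ = 2 * (x₀ - 1))
    (m : ℝ) (hm : x₀ ≤ m) (t : ℝ) (ht : 1 ≤ t) :
    (Real.log t) ^ 2 ≤ (Real.log m) ^ 2 + (2 * Real.log m / m) * (t - m) := by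
  have he1 : (1:ℝ) < Real.exp 1 := by
    nlinarith [Real.add_one_le_exp 1]
  have hem : Real.exp 1 < m := lt_of_lt_of_le hx₀ hm
  have hm1 : (1:ℝ) < m := lt_trans he1 hem
  have hm0 : (0:ℝ) < m := by linarith
  have hlogm : 0 < Real.log m := Real.log_pos hm1
  set c : ℝ := 2 * Real.log m / m with hc
  set D : ℝ → ℝ := fun t => (Real.log m) ^ 2 + c * (t - m) - (Real.log t) ^ 2 with hD
  -- ψ(m) ≤ 0
  have hpsi : 2 * (m - 1) ≤ m * Real.log m := by
    have := psi_anti (mem_Ici.2 hx₀.le) (mem_Ici.2 hem.le) hm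
    simp only at this
    nlinarith [hx₀eq]
  suffices h : 0 ≤ D t by simp only [hD] at h; linarith
  -- derivative facts
  have hDeriv : ∀ x : ℝ, 0 < x → HasDerivAt D (c - 2 * Real.log x / x) x := by
    intro x hx0
    have h1 : HasDerivAt (fun t : ℝ => (Real.log m) ^ 2 + c * (t - m)) c x := by
      simpa using (((hasDerivAt_id x).sub_const m).const_mul c).const_add ((Real.log m) ^ 2)
    have h2 := (Real.hasDerivAt_log hx0.ne').pow 2
    have := h1.sub h2
    exact this.congr_deriv (by push_cast; ring)
  have hDm : D m = 0 := by simp [hD]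
  -- D antitone on [e, m]
  have hanti : AntitoneOn D (Icc (Real.exp 1) m) := by
    apply antitoneOn_of_hasDerivWithinAt_nonpos (convex_Icc _ _)
      (f' := fun x => c - 2 * Real.log x / x)
    · intro x hx
      exact ((hDeriv x (lt_of_lt_of_le (Real.exp_pos 1) hx.1)).continuousAt).continuousWithinAt
    · intro x hx
      rw [interior_Icc] at hx
      exact (hDeriv x (lt_trans (Real.exp_pos 1) hx.1)).hasDerivWithinAt
    · intro x hx
      rw [interior_Icc] at hx
      have hle : Real.log m / m ≤ Real.log x / x :=
        logdiv_anti (mem_Ici.2 hx.1.le) (mem_Ici.2 (le_trans hx.1.le hx.2.le)) hx.2.le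
      simp only [hc]
      have : 2 * (Real.log m / m) ≤ 2 * (Real.log x / x) := by linarith
      calc 2 * Real.log m / m - 2 * Real.log x / x
          = 2 * (Real.log m / m) - 2 * (Real.log x / x) := by ring
        _ ≤ 0 := by linarith
  -- D monotone on [m, ∞)
  have hmono : MonotoneOn D (Ici m) := by
    apply monotoneOn_of_hasDerivWithinAt_nonneg (convex_Ici _)
      (f' := fun x => c - 2 * Real.log x / x)
    · intro x hx
      exact ((hDeriv x (lt_of_lt_of_le hm0 hx)).continuousAt).continuousWithinAt
    · intro x hx
      rw [interior_Ici] at hx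
      exact (hDeriv x (lt_trans hm0 hx)).hasDerivWithinAt
    · intro x hx
      rw [interior_Ici] at hx
      have hle : Real.log x / x ≤ Real.log m / m :=
        logdiv_anti (mem_Ici.2 hem.le) (mem_Ici.2 (le_trans hem.le hx.out.le)) hx.out.le
      simp only [hc]
      calc 2 * Real.log m / m - 2 * Real.log x / x
          = 2 * (Real.log m / m) - 2 * (Real.log x / x) := by ring
        _ ≥ 0 := by linarith
  -- D concave on [1, e]
  have hconc : ConcaveOn ℝ (Icc 1 (Real.exp 1)) D := by
    apply concaveOn_of_hasDerivWithinAt2_nonpos (convex_Icc _ _)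
      (f' := fun x => c - 2 * Real.log x / x)
      (f'' := fun x => -((2 * x⁻¹ * x - 2 * Real.log x * 1) / x ^ 2))
    · intro x hx
      exact ((hDeriv x (lt_of_lt_of_le one_pos hx.1)).continuousAt).continuousWithinAt
    · intro x hx
      rw [interior_Icc] at hx
      exact (hDeriv x (lt_trans one_pos hx.1)).hasDerivWithinAt
    · intro x hx
      rw [interior_Icc] at hx
      have hx0 : (0:ℝ) < x := lt_trans one_pos hx.1
      have h2 : HasDerivAt (fun x : ℝ => 2 * Real.log x / x)
          ((2 * x⁻¹ * x - 2 * Real.log x * 1) / x ^ 2) x := by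
        have hl : HasDerivAt (fun x : ℝ => 2 * Real.log x) (2 * x⁻¹) x :=
          (Real.hasDerivAt_log hx0.ne').const_mul 2
        exact hl.div (hasDerivAt_id x) hx0.ne'
      have := (hasDerivAt_const x c).sub h2
      refine HasDerivAt.hasDerivWithinAt ?_
      exact this.congr_deriv (by ring)
    · intro x hx
      rw [interior_Icc] at hx
      have hx0 : (0:ℝ) < x := lt_trans one_pos hx.1
      have hlx : Real.log x ≤ 1 := by
        rw [← Real.log_exp 1]
        exact Real.log_le_log hx0 hx.2.le
      have h1 : 2 * x⁻¹ * x - 2 * Real.log x * 1 = 2 * (1 - Real.log x) := by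
        field_simp
      rw [h1]
      have h4 : (0:ℝ) ≤ 2 * (1 - Real.log x) / x ^ 2 :=
        div_nonneg (by linarith) (by positivity)
      linarith
  -- endpoint values
  have hDe : 0 ≤ D (Real.exp 1) :=
    hDm ▸ hanti (mem_Icc.2 ⟨le_refl _, hem.le⟩) (mem_Icc.2 ⟨hem.le, le_refl _⟩) hem.le
  have hD1 : 0 ≤ D 1 := by
    have h2 : Real.log m * (2 * (m - 1)) ≤ Real.log m * (m * Real.log m) :=
      mul_le_mul_of_nonneg_left hpsi hlogm.le
    simp only [hD]
    rw [Real.log_one, hc]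
    have h3 : Real.log m ^ 2 + 2 * Real.log m / m * (1 - m) - 0 ^ 2
        = (Real.log m * (m * Real.log m) - Real.log m * (2 * (m - 1))) / m := by
      field_simp
      ring
    rw [h3]
    exact div_nonneg (by linarith) hm0.le
  -- case split
  rcases le_or_gt t (Real.exp 1) with hte | hte
  · obtain ⟨a, b, ha, hb, hab, habt⟩ := (Convex.mem_Icc he1.le).1 (mem_Icc.2 ⟨ht, hte⟩)
    have := hconc.2 (mem_Icc.2 ⟨le_refl _, he1.le⟩) (mem_Icc.2 ⟨he1.le, le_refl _⟩) ha hb hab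
    simp only [smul_eq_mul] at this
    rw [mul_one] at this
    have habt' : a + b * Real.exp 1 = t := by linarith
    rw [habt'] at this
    nlinarith [mul_le_mul_of_nonneg_left hD1 ha, mul_le_mul_of_nonneg_left hDe hb]
  · rcases le_or_gt t m with htm | htm
    · have := hanti (mem_Icc.2 ⟨hte.le, htm⟩) (mem_Icc.2 ⟨hem.le, le_refl _⟩) htm
      linarith [hDm ▸ this]
    · have := hmono (mem_Ici.2 (le_refl m)) (mem_Ici.2 htm.le) htm.le
      linarith [hDm ▸ this]

/-- The piecewise upper bound for `(ln x)²` on `[1, ∞)`: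
linear on `[1, x₀]` and equal to `(ln x)²` beyond `x₀`. -/
noncomputable def fbound (x₀ x : ℝ) : ℝ :=
  if x ≤ x₀ then 2 * (Real.log x₀ / x₀) * (x - 1) else (Real.log x) ^ 2

theorem derivative_bound (dA dB : ℕ) (hdA : 1 ≤ dA)
    (x₀ : ℝ) (hx₀ : Real.exp 1 < x₀)
    (hx₀eq : Real.log x₀ * x₀ = 2 * (x₀ - 1))
    (v : Fin dB → Fin dA → ℝ)
    (hpos : ∀ k j, 0 < (v k j) ^ 2)
    (hnorm : ∑ k, ∑ j, (v k j) ^ 2 = 1) :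
    2 * Real.sqrt (∑ k, ∑ j,
        (v k j) ^ 2 * (Real.log ((∑ l, (v k l) ^ 2) / (v k j) ^ 2)) ^ 2) ≤
      2 * Real.sqrt (fbound x₀ (dA : ℝ)) := by
  have hx₀0 : 0 < x₀ := lt_trans (Real.exp_pos 1) hx₀
  set m : ℝ := max x₀ (dA : ℝ) with hmdef
  have hx₀m : x₀ ≤ m := le_max_left _ _
  have hdAm : (dA : ℝ) ≤ m := le_max_right _ _
  set c : ℝ := 2 * Real.log m / m with hc
  have hfb : fbound x₀ (dA : ℝ) = (Real.log m) ^ 2 + c * ((dA : ℝ) - m) := by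
    unfold fbound
    split_ifs with h
    · have hmm : m = x₀ := max_eq_left h
      rw [hc, hmm]
      field_simp
      ring_nf
      nlinarith [hx₀eq, Real.log_nonneg (by nlinarith [Real.add_one_le_exp 1] : (1:ℝ) ≤ x₀)]
    · have hmm : m = (dA : ℝ) := max_eq_right (le_of_lt (not_le.1 h))
      rw [hc, hmm]
      ring
  have hsum : (∑ k, ∑ j,
      (v k j) ^ 2 * (Real.log ((∑ l, (v k l) ^ 2) / (v k j) ^ 2)) ^ 2) ≤ fbound x₀ (dA : ℝ) := by
    rw [hfb]
    have hS : ∀ k, 0 < ∑ l, (v k l) ^ 2 := fun k =>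
      Finset.sum_pos (fun l _ => hpos k l) ⟨⟨0, hdA⟩, Finset.mem_univ _⟩
    have step : ∀ k, ∑ j, (v k j) ^ 2 * (Real.log ((∑ l, (v k l) ^ 2) / (v k j) ^ 2)) ^ 2
        ≤ ((Real.log m) ^ 2 - c * m) * (∑ l, (v k l) ^ 2)
          + (dA : ℝ) * (c * (∑ l, (v k l) ^ 2)) := by
      intro k
      have hterm : ∀ j, (v k j) ^ 2 * (Real.log ((∑ l, (v k l) ^ 2) / (v k j) ^ 2)) ^ 2
          ≤ (v k j) ^ 2 * ((Real.log m) ^ 2 - c * m) + c * (∑ l, (v k l) ^ 2) := by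
        intro j
        have hvj := hpos k j
        have ht1 : 1 ≤ (∑ l, (v k l) ^ 2) / (v k j) ^ 2 := by
          rw [le_div_iff₀ hvj, one_mul]
          exact Finset.single_le_sum (fun l _ => (hpos k l).le) (Finset.mem_univ j)
        have hk := key_ineq x₀ hx₀ hx₀eq m hx₀m _ ht1
        have := mul_le_mul_of_nonneg_left hk hvj.le
        calc (v k j) ^ 2 * (Real.log ((∑ l, (v k l) ^ 2) / (v k j) ^ 2)) ^ 2
            ≤ (v k j) ^ 2 * ((Real.log m) ^ 2
                + c * ((∑ l, (v k l) ^ 2) / (v k j) ^ 2 - m)) := this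
          _ = (v k j) ^ 2 * ((Real.log m) ^ 2 - c * m) + c * (∑ l, (v k l) ^ 2) := by
              have hvj0 : v k j ≠ 0 := fun h => by simp [h] at hvj
              field_simp
              ring
      calc ∑ j, (v k j) ^ 2 * (Real.log ((∑ l, (v k l) ^ 2) / (v k j) ^ 2)) ^ 2
          ≤ ∑ j, ((v k j) ^ 2 * ((Real.log m) ^ 2 - c * m) + c * (∑ l, (v k l) ^ 2)) :=
            Finset.sum_le_sum (fun j _ => hterm j)
        _ = ((Real.log m) ^ 2 - c * m) * (∑ l, (v k l) ^ 2)
            + (dA : ℝ) * (c * (∑ l, (v k l) ^ 2)) := by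
            rw [Finset.sum_add_distrib, ← Finset.sum_mul, Finset.sum_const,
              Finset.card_univ, Fintype.card_fin]
            push_cast
            ring
    calc (∑ k, ∑ j, (v k j) ^ 2 * (Real.log ((∑ l, (v k l) ^ 2) / (v k j) ^ 2)) ^ 2)
        ≤ ∑ k, (((Real.log m) ^ 2 - c * m) * (∑ l, (v k l) ^ 2)
            + (dA : ℝ) * (c * (∑ l, (v k l) ^ 2))) := Finset.sum_le_sum (fun k _ => step k)
      _ = ((Real.log m) ^ 2 - c * m + (dA : ℝ) * c) * (∑ k, ∑ l, (v k l) ^ 2) := by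
          rw [Finset.mul_sum]
          exact Finset.sum_congr rfl (fun k _ => by ring)
      _ = (Real.log m) ^ 2 + c * ((dA : ℝ) - m) := by rw [hnorm]; ring
  have h2 : Real.sqrt (∑ k, ∑ j,
      (v k j) ^ 2 * (Real.log ((∑ l, (v k l) ^ 2) / (v k j) ^ 2)) ^ 2)
      ≤ Real.sqrt (fbound x₀ (dA : ℝ)) := Real.sqrt_le_sqrt hsum
  linarith
end

section
/- Let ρ, σ be invertible density operators on a finite-dimensional complex Hilbert space and suppose 1 − F(ρ,σ) = T(ρ,σ), where F(ρ,σ) = ‖√ρ·√σ‖₁ and T(ρ,σ) = (1/2)‖ρ−σ‖₁. Then ρ = σ. -/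
open Matrix
open scoped ComplexOrder

/-- The positive semidefinite square root of a positive semidefinite matrix
(as defined in Mathlib of December 2024, since removed). -/
noncomputable def Matrix.PosSemidef.sqrt {n 𝕜 : Type*} [Fintype n] [RCLike 𝕜] [DecidableEq n]
    {A : Matrix n n 𝕜} (hA : A.PosSemidef) : Matrix n n 𝕜 :=
  hA.1.eigenvectorUnitary.1 * diagonal ((↑) ∘ (√·) ∘ hA.1.eigenvalues) *
    (star hA.1.eigenvectorUnitary : Matrix n n 𝕜)

section SqrtAux

open scoped MatrixOrder

lemma Matrix.PosSemidef.sqrt_eq_cfc {n : ℕ} {A : Matrix (Fin n) (Fin n) ℂ} (hA : A.PosSemidef) :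
    hA.sqrt = CFC.sqrt A := by
  rw [CFC.sqrt_eq_real_sqrt A hA.nonneg, cfcₙ_eq_cfc, hA.1.cfc_eq]
  simp only [Matrix.PosSemidef.sqrt, Matrix.IsHermitian.cfc, Unitary.conjStarAlgAut_apply]

lemma Matrix.PosSemidef.posSemidef_sqrt {n : ℕ} {A : Matrix (Fin n) (Fin n) ℂ}
    (hA : A.PosSemidef) : hA.sqrt.PosSemidef := by
  rw [hA.sqrt_eq_cfc]; exact (CFC.sqrt_nonneg A).posSemidef

lemma Matrix.PosSemidef.sqrt_mul_self {n : ℕ} {A : Matrix (Fin n) (Fin n) ℂ}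
    (hA : A.PosSemidef) : hA.sqrt * hA.sqrt = A := by
  rw [hA.sqrt_eq_cfc]; exact CFC.sqrt_mul_sqrt_self A hA.nonneg

lemma Matrix.PosSemidef.eq_sqrt_of_sq_eq {n : ℕ} {A B : Matrix (Fin n) (Fin n) ℂ}
    (hA : A.PosSemidef) (hB : B.PosSemidef) (h : A ^ 2 = B) : A = hB.sqrt := by
  rw [hB.sqrt_eq_cfc, ← h, CFC.sqrt_sq A hA.nonneg]

lemma Matrix.IsHermitian.star_mul_self_mul_eq_diagonal {n : ℕ} {A : Matrix (Fin n) (Fin n) ℂ}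
    (hA : A.IsHermitian) : star (hA.eigenvectorUnitary : Matrix (Fin n) (Fin n) ℂ) * A *
      (hA.eigenvectorUnitary : Matrix (Fin n) (Fin n) ℂ) =
      Matrix.diagonal (Complex.ofReal ∘ hA.eigenvalues) := by
  have := hA.conjStarAlgAut_star_eigenvectorUnitary
  rw [Unitary.conjStarAlgAut_star_apply] at this
  exact this

end SqrtAux

/-- The trace norm of a (square complex) matrix: `‖A‖₁ = tr √(Aᴴ A)`. -/
noncomputable def traceNorm {n : ℕ} (A : Matrix (Fin n) (Fin n) ℂ) : ℝ :=
  ((Matrix.posSemidef_conjTranspose_mul_self A).sqrt).trace.re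

namespace FvdGAux

variable {n : ℕ}

/-- Diagonal entries of a PSD matrix have nonnegative real part. -/
lemma diag_re_nonneg {P : Matrix (Fin n) (Fin n) ℂ} (hP : P.PosSemidef) (i : Fin n) :
    0 ≤ (P i i).re := by
  have h := hP.dotProduct_mulVec_nonneg (Pi.single i 1)
  have he : dotProduct (star (Pi.single i 1)) (P *ᵥ Pi.single i 1) = P i i := by
    simp [Matrix.mulVec_single, dotProduct, Pi.single_apply, Finset.sum_ite_eq',
      apply_ite]
  rw [he] at h
  exact (Complex.le_def.mp h).1

lemma diag_re_pos {P : Matrix (Fin n) (Fin n) ℂ} (hP : P.PosDef) (i : Fin n) :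
    0 < (P i i).re := by
  have hone : (Pi.single i 1 : Fin n → ℂ) ≠ 0 := by
    intro h0
    simpa using congrFun h0 i
  have h := hP.dotProduct_mulVec_pos hone
  have he : dotProduct (star (Pi.single i 1)) (P *ᵥ Pi.single i 1) = P i i := by
    simp [Matrix.mulVec_single, dotProduct, Pi.single_apply, Finset.sum_ite_eq',
      apply_ite]
  rw [he] at h
  exact (Complex.lt_def.mp h).1

/-- The square root of a positive definite matrix is positive definite. -/
lemma posDef_sqrt {ρ : Matrix (Fin n) (Fin n) ℂ} (hρ : ρ.PosDef) :
    (hρ.posSemidef.sqrt).PosDef := by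
  set a := hρ.posSemidef.sqrt with ha_def
  have ha : a.PosSemidef := hρ.posSemidef.posSemidef_sqrt
  have haa : a * a = ρ := hρ.posSemidef.sqrt_mul_self
  refine Matrix.PosDef.of_dotProduct_mulVec_pos ha.1 fun x hx => ?_
  set s := ha.sqrt with hs_def
  have hs : s.PosSemidef := ha.posSemidef_sqrt
  have hss : s * s = a := ha.sqrt_mul_self
  have key : dotProduct (star x) (a *ᵥ x)
      = dotProduct (star (s *ᵥ x)) (s *ᵥ x) := by
    rw [star_mulVec, ← hss, ← Matrix.mulVec_mulVec, dotProduct_mulVec, hs.1]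
  rw [key]
  rw [dotProduct_star_self_pos_iff]
  intro hzero
  have hax : a *ᵥ x = 0 := by
    rw [← hss, ← Matrix.mulVec_mulVec, hzero, Matrix.mulVec_zero]
  have hρx : ρ *ᵥ x = 0 := by
    rw [← haa, ← Matrix.mulVec_mulVec, hax, Matrix.mulVec_zero]
  have := hρ.dotProduct_mulVec_pos hx
  rw [hρx, dotProduct_zero] at this
  exact lt_irrefl _ this

/-- Conjugation of a positive definite matrix by a unitary is positive definite. -/
lemma posDef_conj {P V : Matrix (Fin n) (Fin n) ℂ} (hP : P.PosDef)
    (hV : Vᴴ * V = 1) : (Vᴴ * P * V).PosDef := by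
  have herm : (Vᴴ * P * V).IsHermitian := by
    unfold Matrix.IsHermitian
    rw [Matrix.conjTranspose_mul, Matrix.conjTranspose_mul, Matrix.conjTranspose_conjTranspose,
      hP.1.eq, mul_assoc]
  refine Matrix.PosDef.of_dotProduct_mulVec_pos herm fun x hx => ?_
  have hVx : V *ᵥ x ≠ 0 := by
    intro h0
    apply hx
    have : (Vᴴ * V) *ᵥ x = 0 := by rw [← Matrix.mulVec_mulVec, h0, Matrix.mulVec_zero]
    rwa [hV, Matrix.one_mulVec] at this
  have key : dotProduct (star x) ((Vᴴ * P * V) *ᵥ x)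
      = dotProduct (star (V *ᵥ x)) (P *ᵥ (V *ᵥ x)) := by
    rw [← Matrix.mulVec_mulVec, ← Matrix.mulVec_mulVec, dotProduct_mulVec (star x) Vᴴ,
      ← star_mulVec]
  rw [key]
  exact hP.dotProduct_mulVec_pos hVx

/-- Conjugation of a PSD matrix by `Vᴴ · V`. -/
lemma psd_conj {P V : Matrix (Fin n) (Fin n) ℂ} (hP : P.PosSemidef)
    : (Vᴴ * P * V).PosSemidef :=
  hP.conjTranspose_mul_mul_same V

/-- The real part of the trace is at most the trace norm. -/
lemma re_trace_le_traceNorm (A : Matrix (Fin n) (Fin n) ℂ) :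
    (A.trace).re ≤ traceNorm A := by
  have hS : (Aᴴ * A).PosSemidef := Matrix.posSemidef_conjTranspose_mul_self A
  set S := hS.sqrt with hS_def
  have hSp : S.PosSemidef := hS.posSemidef_sqrt
  have hH : S.IsHermitian := hSp.1
  set U : Matrix (Fin n) (Fin n) ℂ := (hH.eigenvectorUnitary : Matrix (Fin n) (Fin n) ℂ)
    with hU_def
  have hU1 : star U * U = 1 := Matrix.mem_unitaryGroup_iff'.mp hH.eigenvectorUnitary.2
  have hU2 : U * star U = 1 := Matrix.mem_unitaryGroup_iff.mp hH.eigenvectorUnitary.2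
  set ev := hH.eigenvalues with hev_def
  have hev : ∀ i, 0 ≤ ev i := hSp.eigenvalues_nonneg
  have hdiag : star U * S * U = Matrix.diagonal (Complex.ofReal ∘ ev) :=
    hH.star_mul_self_mul_eq_diagonal
  have hSS : S * S = Aᴴ * A := hS.sqrt_mul_self
  -- (A*U)ᴴ * (A*U) = D²
  have hC : (A * U)ᴴ * (A * U)
      = Matrix.diagonal (Complex.ofReal ∘ ev) * Matrix.diagonal (Complex.ofReal ∘ ev) := by
    have e1 : (A * U)ᴴ * (A * U) = star U * (Aᴴ * A) * U := by
      rw [Matrix.conjTranspose_mul]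
      simp only [Matrix.star_eq_conjTranspose]
      noncomm_ring
    rw [e1, ← hSS, ← hdiag]
    have e2 : (star U * S * U) * (star U * S * U) = star U * S * (U * star U) * (S * U) := by
      noncomm_ring
    rw [e2, hU2, mul_one]
    noncomm_ring
  -- trace A = trace (Uᴴ A U)
  have htrA : A.trace = (star U * A * U).trace := by
    rw [Matrix.trace_mul_cycle, hU2, one_mul]
  -- trace S = ∑ ev
  have htrS : S.trace = (∑ i, (ev i : ℂ)) := by
    have : S.trace = (star U * S * U).trace := by
      rw [Matrix.trace_mul_cycle, hU2, one_mul]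
    rw [this, hdiag, Matrix.trace_diagonal]
    rfl
  have htraceNorm : traceNorm A = ∑ i, ev i := by
    unfold traceNorm
    rw [← hS_def, htrS]
    rw [Complex.re_sum]
    simp
  rw [htraceNorm, htrA]
  -- bound each diagonal entry
  have hbound : ∀ i, ((star U * A * U) i i).re ≤ ev i := by
    intro i
    have hBii : (star U * A * U) i i = ∑ j, star (U j i) * (A * U) j i := by
      rw [mul_assoc, Matrix.mul_apply]
      rfl
    have hUcol : ∑ j, ‖U j i‖ ^ 2 = 1 := by
      have h1 : (star U * U) i i = 1 := by rw [hU1]; simp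
      have h2 : (star U * U) i i = ∑ j, star (U j i) * U j i := by
        rw [Matrix.mul_apply]; rfl
      have h3 : (∑ j, star (U j i) * U j i) = ((∑ j, ‖U j i‖ ^ 2 : ℝ) : ℂ) := by
        push_cast
        congr 1
        ext j
        rw [Complex.star_def, ← Complex.normSq_eq_conj_mul_self, ← Complex.ofReal_pow, Complex.sq_norm]
      rw [h2, h3] at h1
      exact_mod_cast h1
    have hCcol : ∑ j, ‖(A * U) j i‖ ^ 2 = ev i ^ 2 := by
      have h1 : ((A * U)ᴴ * (A * U)) i i = ((ev i : ℂ)) * ((ev i : ℂ)) := by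
        rw [hC]; simp [Matrix.diagonal_mul_diagonal, Matrix.diagonal_apply_eq]
      have h2 : ((A * U)ᴴ * (A * U)) i i = ∑ j, star ((A * U) j i) * (A * U) j i := by
        rw [Matrix.mul_apply]; rfl
      have h3 : (∑ j, star ((A * U) j i) * (A * U) j i)
          = ((∑ j, ‖(A * U) j i‖ ^ 2 : ℝ) : ℂ) := by
        push_cast
        congr 1
        ext j
        rw [Complex.star_def, ← Complex.normSq_eq_conj_mul_self, ← Complex.ofReal_pow, Complex.sq_norm]
      rw [h2, h3] at h1
      have : ((ev i : ℂ)) * ((ev i : ℂ)) = ((ev i ^ 2 : ℝ) : ℂ) := by push_cast; ring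
      rw [this] at h1
      exact_mod_cast h1
    calc ((star U * A * U) i i).re ≤ ‖(star U * A * U) i i‖ := Complex.re_le_norm _
      _ ≤ ∑ j, ‖U j i‖ * ‖(A * U) j i‖ := by
          rw [hBii]
          refine le_trans (norm_sum_le _ _) ?_
          apply le_of_eq
          congr 1
          ext j
          rw [norm_mul]
          simp
      _ ≤ Real.sqrt (∑ j, ‖U j i‖ ^ 2)
            * Real.sqrt (∑ j, ‖(A * U) j i‖ ^ 2) :=
          Real.sum_mul_le_sqrt_mul_sqrt _ _ _
      _ = ev i := by
          rw [hUcol, hCcol, Real.sqrt_one, one_mul, Real.sqrt_sq (hev i)]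
  calc (Matrix.trace (star U * A * U)).re = ∑ i, ((star U * A * U) i i).re := by
        rw [Matrix.trace]
        exact Complex.re_sum _ _
    _ ≤ ∑ i, ev i := Finset.sum_le_sum fun i _ => hbound i

/-- For a Hermitian matrix `M`, `√(MᴴM) ± M` is PSD. -/
lemma abs_psd {M : Matrix (Fin n) (Fin n) ℂ} (hM : M.IsHermitian) :
    ((Matrix.posSemidef_conjTranspose_mul_self M).sqrt - M).PosSemidef ∧
      ((Matrix.posSemidef_conjTranspose_mul_self M).sqrt + M).PosSemidef := by
  have hMM : (Mᴴ * M).PosSemidef := Matrix.posSemidef_conjTranspose_mul_self M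
  set V : Matrix (Fin n) (Fin n) ℂ := (hM.eigenvectorUnitary : Matrix (Fin n) (Fin n) ℂ)
  have hV1 : star V * V = 1 := Matrix.mem_unitaryGroup_iff'.mp hM.eigenvectorUnitary.2
  have hV2 : V * star V = 1 := Matrix.mem_unitaryGroup_iff.mp hM.eigenvectorUnitary.2
  set μ := hM.eigenvalues
  have hspec : M = V * Matrix.diagonal (Complex.ofReal ∘ μ) * star V := by
    have := hM.spectral_theorem
    rw [Unitary.conjStarAlgAut_apply] at this
    exact this
  set N : Matrix (Fin n) (Fin n) ℂ :=
    V * Matrix.diagonal (fun i => (Complex.ofReal |μ i|)) * star V with hN_def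
  have hNpsd : N.PosSemidef := by
    apply Matrix.PosSemidef.mul_mul_conjTranspose_same
    refine Matrix.posSemidef_diagonal_iff.mpr fun i => ?_
    exact_mod_cast Complex.zero_le_real.mpr (abs_nonneg _)
  have hNsq : N ^ 2 = Mᴴ * M := by
    rw [hM.eq]
    rw [pow_two, hN_def, hspec]
    have expand : ∀ (d e : Fin n → ℂ),
        (V * Matrix.diagonal d * star V) * (V * Matrix.diagonal e * star V)
          = V * (Matrix.diagonal d * Matrix.diagonal e) * star V := by
      intro d e
      calc (V * Matrix.diagonal d * star V) * (V * Matrix.diagonal e * star V)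
          = V * Matrix.diagonal d * (star V * V) * Matrix.diagonal e * star V := by
            noncomm_ring
        _ = V * (Matrix.diagonal d * Matrix.diagonal e) * star V := by
            rw [hV1]; noncomm_ring
    rw [expand, expand, Matrix.diagonal_mul_diagonal, Matrix.diagonal_mul_diagonal]
    have hfun : (fun i => Complex.ofReal |μ i| * Complex.ofReal |μ i|)
        = fun i => (Complex.ofReal ∘ μ) i * (Complex.ofReal ∘ μ) i := by
      funext i
      simp only [Function.comp_apply]
      rw [← Complex.ofReal_mul, ← Complex.ofReal_mul, abs_mul_abs_self]
    rw [hfun]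
  have hNeq : N = hMM.sqrt := hNpsd.eq_sqrt_of_sq_eq hMM hNsq
  constructor
  · have : hMM.sqrt - M
        = V * Matrix.diagonal (fun i => ((|μ i| - μ i : ℝ) : ℂ)) * star V := by
      rw [← hNeq, hN_def]
      conv_lhs => rw [hspec]
      rw [← Matrix.sub_mul, ← Matrix.mul_sub, Matrix.diagonal_sub]
      have hfun : (fun i => Complex.ofReal |μ i| - (Complex.ofReal ∘ μ) i)
          = fun i => ((|μ i| - μ i : ℝ) : ℂ) := by
        funext i
        simp [Complex.ofReal_sub]
      rw [hfun]
    rw [this]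
    apply Matrix.PosSemidef.mul_mul_conjTranspose_same
    refine Matrix.posSemidef_diagonal_iff.mpr fun i => ?_
    refine Complex.zero_le_real.mpr ?_
    simp [neg_abs_le, le_abs_self]
  · have : hMM.sqrt + M
        = V * Matrix.diagonal (fun i => ((|μ i| + μ i : ℝ) : ℂ)) * star V := by
      rw [← hNeq, hN_def]
      conv_lhs => rw [hspec]
      rw [← Matrix.add_mul, ← Matrix.mul_add, Matrix.diagonal_add]
      have hfun : (fun i => Complex.ofReal |μ i| + (Complex.ofReal ∘ μ) i)
          = fun i => ((|μ i| + μ i : ℝ) : ℂ) := by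
        funext i
        simp [Complex.ofReal_add]
      rw [hfun]
    rw [this]
    apply Matrix.PosSemidef.mul_mul_conjTranspose_same
    refine Matrix.posSemidef_diagonal_iff.mpr fun i => ?_
    refine Complex.zero_le_real.mpr ?_
    have := neg_abs_le (μ i)
    linarith

/-- Key strict inequality: for distinct positive definite `a ≠ b`,
`tr((a-b)²).re < ‖a*a - b*b‖₁`. -/
lemma key_strict {a b : Matrix (Fin n) (Fin n) ℂ} (ha : a.PosDef) (hb : b.PosDef)
    (hab : a ≠ b) :
    (((a - b) * (a - b)).trace).re < traceNorm (a * a - b * b) := by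
  set c := a - b with hc_def
  have hc : c.IsHermitian := ha.1.sub hb.1
  have hcne : c ≠ 0 := sub_ne_zero.mpr hab
  set V : Matrix (Fin n) (Fin n) ℂ := (hc.eigenvectorUnitary : Matrix (Fin n) (Fin n) ℂ)
    with hV_def
  have hV1 : star V * V = 1 := Matrix.mem_unitaryGroup_iff'.mp hc.eigenvectorUnitary.2
  have hV2 : V * star V = 1 := Matrix.mem_unitaryGroup_iff.mp hc.eigenvectorUnitary.2
  set μ := hc.eigenvalues with hμ_def
  have hVc : star V * c * V = Matrix.diagonal (Complex.ofReal ∘ μ) :=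
    hc.star_mul_self_mul_eq_diagonal
  set M := a * a - b * b with hM_def
  have hMherm : M.IsHermitian := by
    unfold Matrix.IsHermitian
    rw [hM_def, Matrix.conjTranspose_sub, Matrix.conjTranspose_mul, Matrix.conjTranspose_mul,
      ha.1.eq, hb.1.eq]
  have hMM : (Mᴴ * M).PosSemidef := Matrix.posSemidef_conjTranspose_mul_self M
  set A' := Vᴴ * a * V with hA'_def
  set B' := Vᴴ * b * V with hB'_def
  have hstarV : star V = Vᴴ := Matrix.star_eq_conjTranspose V
  have hA'pd : A'.PosDef := posDef_conj ha (by rw [← hstarV]; exact hV1)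
  have hB'pd : B'.PosDef := posDef_conj hb (by rw [← hstarV]; exact hV1)
  set α := fun i => (A' i i).re with hα_def
  set β := fun i => (B' i i).re with hβ_def
  have hαpos : ∀ i, 0 < α i := fun i => diag_re_pos hA'pd i
  have hβpos : ∀ i, 0 < β i := fun i => diag_re_pos hB'pd i
  -- μ i = α i - β i
  have hsub : A' - B' = Matrix.diagonal (Complex.ofReal ∘ μ) := by
    rw [hA'_def, hB'_def, ← Matrix.sub_mul, ← Matrix.mul_sub, ← hstarV, ← hc_def, hVc]
  have hμαβ : ∀ i, μ i = α i - β i := by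
    intro i
    have h1 : A' i i - B' i i = ((μ i : ℝ) : ℂ) := by
      have := congrFun (congrFun hsub i) i
      simpa [Matrix.sub_apply, Matrix.diagonal_apply_eq] using this
    have := congrArg Complex.re h1
    simp only [Complex.sub_re, Complex.ofReal_re] at this
    rw [← this]
  -- diagonal entries of Vᴴ M V
  have hMc : M = c * a + b * c := by rw [hM_def, hc_def]; noncomm_ring
  have hV2' : V * Vᴴ = 1 := by rw [← hstarV]; exact hV2
  have hVMV : Vᴴ * M * V = Matrix.diagonal (Complex.ofReal ∘ μ) * A'
      + B' * Matrix.diagonal (Complex.ofReal ∘ μ) := by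
    rw [← hVc, hstarV, hA'_def, hB'_def]
    have e1 : (Vᴴ * c * V) * (Vᴴ * a * V) = Vᴴ * (c * a) * V := by
      have e : (Vᴴ * c * V) * (Vᴴ * a * V) = Vᴴ * c * (V * Vᴴ) * (a * V) := by noncomm_ring
      rw [e, hV2', mul_one]
      noncomm_ring
    have e2 : (Vᴴ * b * V) * (Vᴴ * c * V) = Vᴴ * (b * c) * V := by
      have e : (Vᴴ * b * V) * (Vᴴ * c * V) = Vᴴ * b * (V * Vᴴ) * (c * V) := by noncomm_ring
      rw [e, hV2', mul_one]
      noncomm_ring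
    rw [e1, e2, ← hstarV]
    rw [hMc]
    noncomm_ring
  have hdiagM : ∀ i, ((Vᴴ * M * V) i i).re = μ i * (α i + β i) := by
    intro i
    have h1 : (Vᴴ * M * V) i i = ((μ i : ℝ) : ℂ) * A' i i + B' i i * ((μ i : ℝ) : ℂ) := by
      rw [hVMV]
      simp [Matrix.add_apply, Matrix.diagonal_mul, Matrix.mul_diagonal, Function.comp]
    rw [h1]
    simp only [Complex.add_re, Complex.mul_re, Complex.ofReal_re, Complex.ofReal_im]
    ring
  -- |M| and its conjugated diagonal
  set S := hMM.sqrt with hS_def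
  set s := fun i => ((Vᴴ * S * V) i i).re with hs_def
  have habs := abs_psd hMherm
  have hrs : ∀ i, |((Vᴴ * M * V) i i).re| ≤ s i := by
    intro i
    have h1 : (Vᴴ * (S - M) * V).PosSemidef := psd_conj habs.1
    have h2 : (Vᴴ * (S + M) * V).PosSemidef := psd_conj habs.2
    have e1 : Vᴴ * (S - M) * V = Vᴴ * S * V - Vᴴ * M * V := by noncomm_ring
    have e2 : Vᴴ * (S + M) * V = Vᴴ * S * V + Vᴴ * M * V := by noncomm_ring
    have d1 := diag_re_nonneg h1 i
    have d2 := diag_re_nonneg h2 i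
    rw [e1] at d1; rw [e2] at d2
    simp only [Matrix.sub_apply, Matrix.add_apply, Complex.sub_re, Complex.add_re] at d1 d2
    rw [abs_le]
    constructor <;> [linarith; linarith]
  -- traceNorm M = ∑ s
  have htrN : traceNorm M = ∑ i, s i := by
    unfold traceNorm
    have h1 : S.trace = (Vᴴ * S * V).trace := by
      rw [Matrix.trace_mul_cycle, ← hstarV, hV2, one_mul]
    rw [← hS_def, h1, Matrix.trace]
    exact Complex.re_sum _ _
  -- trace of c*c
  have hcspec : c = V * Matrix.diagonal (Complex.ofReal ∘ μ) * Vᴴ := by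
    rw [← hstarV]
    have := hc.spectral_theorem
    rw [Unitary.conjStarAlgAut_apply] at this
    exact this
  have htrc : ((c * c).trace).re = ∑ i, (μ i) ^ 2 := by
    have h1 : c * c = V * (Matrix.diagonal (Complex.ofReal ∘ μ)
        * Matrix.diagonal (Complex.ofReal ∘ μ)) * Vᴴ := by
      conv_lhs => rw [hcspec]
      calc V * Matrix.diagonal (Complex.ofReal ∘ μ) * Vᴴ
            * (V * Matrix.diagonal (Complex.ofReal ∘ μ) * Vᴴ)
          = V * Matrix.diagonal (Complex.ofReal ∘ μ) * (Vᴴ * V)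
            * Matrix.diagonal (Complex.ofReal ∘ μ) * Vᴴ := by noncomm_ring
        _ = _ := by rw [← hstarV, hV1]; noncomm_ring
    have h2 : (c * c).trace = (Matrix.diagonal (Complex.ofReal ∘ μ)
        * Matrix.diagonal (Complex.ofReal ∘ μ)).trace := by
      rw [h1, Matrix.trace_mul_cycle, ← hstarV, hV1, one_mul]
    rw [h2, Matrix.diagonal_mul_diagonal, Matrix.trace_diagonal]
    rw [Complex.re_sum]
    congr 1
    ext i
    simp [Function.comp, ← Complex.ofReal_mul, sq]
  -- pointwise bounds
  have hle : ∀ i, (μ i) ^ 2 ≤ s i := by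
    intro i
    have h1 : |μ i| ≤ α i + β i := by
      rw [hμαβ i]
      have := hαpos i; have := hβpos i
      rw [abs_le]; constructor <;> linarith
    have h2 : (μ i) ^ 2 = |μ i| * |μ i| := by rw [abs_mul_abs_self]; ring
    have h3 : |((Vᴴ * M * V) i i).re| = |μ i| * (α i + β i) := by
      rw [hdiagM i, abs_mul]
      congr 1
      rw [abs_of_pos (by have := hαpos i; have := hβpos i; linarith)]
    calc (μ i) ^ 2 = |μ i| * |μ i| := h2
      _ ≤ |μ i| * (α i + β i) := by
          exact mul_le_mul_of_nonneg_left h1 (abs_nonneg _)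
      _ = |((Vᴴ * M * V) i i).re| := (h3).symm
      _ ≤ s i := hrs i
  -- strictness at some index
  obtain ⟨i₀, hi₀⟩ : ∃ i, μ i ≠ 0 := by
    by_contra hall
    push_neg at hall
    apply hcne
    rw [hcspec]
    have : Matrix.diagonal (Complex.ofReal ∘ μ) = 0 := by
      ext i j
      by_cases hij : i = j
      · subst hij; simp [Matrix.diagonal_apply_eq, hall i]
      · simp [Matrix.diagonal_apply_ne _ hij]
    rw [this, Matrix.mul_zero, Matrix.zero_mul]
  have hlt : (μ i₀) ^ 2 < s i₀ := by
    have h1 : |μ i₀| < α i₀ + β i₀ := by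
      rw [hμαβ i₀]
      have := hαpos i₀; have := hβpos i₀
      rw [abs_lt]; constructor <;> linarith
    have h2 : (μ i₀) ^ 2 = |μ i₀| * |μ i₀| := by rw [abs_mul_abs_self]; ring
    have hμpos : 0 < |μ i₀| := abs_pos.mpr hi₀
    have h3 : |((Vᴴ * M * V) i₀ i₀).re| = |μ i₀| * (α i₀ + β i₀) := by
      rw [hdiagM i₀, abs_mul]
      congr 1
      rw [abs_of_pos (by have := hαpos i₀; have := hβpos i₀; linarith)]
    calc (μ i₀) ^ 2 = |μ i₀| * |μ i₀| := h2
      _ < |μ i₀| * (α i₀ + β i₀) := by exact mul_lt_mul_of_pos_left h1 hμpos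
      _ = |((Vᴴ * M * V) i₀ i₀).re| := h3.symm
      _ ≤ s i₀ := hrs i₀
  rw [htrc, htrN]
  exact Finset.sum_lt_sum (fun i _ => hle i) ⟨i₀, Finset.mem_univ _, hlt⟩

end FvdGAux

open FvdGAux

/-- If invertible density operators saturate the lower Fuchs–van de Graaf
inequality, `1 - F(ρ,σ) = T(ρ,σ)`, then `ρ = σ`. -/
theorem fvdg_lower_saturation_invertible {n : ℕ}
    (ρ σ : Matrix (Fin n) (Fin n) ℂ)
    (hρ : ρ.PosDef) (hσ : σ.PosDef)
    (hρtr : ρ.trace = 1) (hσtr : σ.trace = 1)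
    (h : 1 - traceNorm (hρ.posSemidef.sqrt * hσ.posSemidef.sqrt) =
        (1 / 2) * traceNorm (ρ - σ)) :
    ρ = σ := by
  set a := hρ.posSemidef.sqrt with ha_def
  set b := hσ.posSemidef.sqrt with hb_def
  have haa : a * a = ρ := hρ.posSemidef.sqrt_mul_self
  have hbb : b * b = σ := hσ.posSemidef.sqrt_mul_self
  by_contra hne
  have hab : a ≠ b := fun hh => hne (by rw [← haa, ← hbb, hh])
  have hkey := key_strict (posDef_sqrt hρ) (posDef_sqrt hσ) hab
  rw [← ha_def, ← hb_def, haa, hbb] at hkey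
  -- compute trace of (a-b)²
  have hexp : (a - b) * (a - b) = ρ - a * b - b * a + σ := by
    rw [← haa, ← hbb]; noncomm_ring
  have htr : (((a - b) * (a - b)).trace).re = 2 - 2 * ((a * b).trace).re := by
    rw [hexp]
    have hba : (b * a).trace = (a * b).trace := Matrix.trace_mul_comm b a
    rw [Matrix.trace_add, Matrix.trace_sub, Matrix.trace_sub, hba, hρtr, hσtr]
    simp only [Complex.add_re, Complex.sub_re, Complex.one_re]
    ring
  rw [htr] at hkey
  have hF : ((a * b).trace).re ≤ traceNorm (a * b) := re_trace_le_traceNorm (a * b)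
  linarith
end

section
/- Let z₁,...,zₙ ∈ ℂ with |z_x| ≤ 1 for each x, such that ∑_x z_x is real and ∑_x |z_x| − ∑_x z_x ≤ ε for some ε ≥ 0. Then for every x, | |z_x| − z_x | ≤ √(2ε). -/
/-- If complex numbers `z x` of modulus at most 1 have a real sum within `ε` of the
sum of their moduli, then each `z x` is within `√(2ε)` of its modulus. -/
theorem abs_sub_self_le_of_sum_close {n : ℕ} (z : Fin n → ℂ) (ε : ℝ)
    (hε : 0 ≤ ε)
    (hz : ∀ x, ‖z x‖ ≤ 1)
    (hreal : (∑ x, z x).im = 0)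
    (hclose : ∑ x, ‖z x‖ - (∑ x, z x).re ≤ ε) :
    ∀ x, ‖((‖z x‖ : ℝ) : ℂ) - z x‖ ≤ Real.sqrt (2 * ε) := by
  intro x
  have hsum : ∑ y, (‖z y‖ - (z y).re) ≤ ε := by
    rw [Finset.sum_sub_distrib]
    simpa [Complex.re_sum] using hclose
  have hterm : ∀ y ∈ Finset.univ, 0 ≤ ‖z y‖ - (z y).re := fun y _ =>
    sub_nonneg.mpr (Complex.re_le_norm _)
  have hx : ‖z x‖ - (z x).re ≤ ε :=
    le_trans (Finset.single_le_sum hterm (Finset.mem_univ x)) hsum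
  set a := ‖z x‖ with ha
  have hnormSq : (a : ℝ) ^ 2 = (z x).re ^ 2 + (z x).im ^ 2 := by
    rw [ha, ← Complex.normSq_eq_norm_sq, Complex.normSq_apply]; ring
  rw [Real.le_sqrt (norm_nonneg _)]
  swap
  · positivity
  rw [Complex.sq_norm, Complex.normSq_sub]
  have h1 : Complex.normSq ((a : ℂ)) = a ^ 2 := by simp [Complex.normSq_apply]; ring
  have h2 : Complex.normSq (z x) = a ^ 2 := by
    rw [Complex.normSq_apply, hnormSq]; ring
  have h3 : ((a : ℂ) * (starRingEnd ℂ) (z x)).re = a * (z x).re := by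
    simp [Complex.mul_re]
  rw [h1, h2, h3]
  have key : a ^ 2 - a * (z x).re ≤ a - (z x).re := by
    have h := hz x
    have h0 : (0:ℝ) ≤ a - (z x).re := sub_nonneg.mpr (Complex.re_le_norm _)
    nlinarith [norm_nonneg (z x)]
  nlinarith
end
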